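/- Let C be a monotone, countably subadditive set function on ℝ^n with C(∅)=0, and let T be a quasi-linear operator satisfying |T(f₁+f₂)(x)| ≤ K(|T f₁(x)| + |T f₂(x)|). If T satisfies the weak-type (1,1) bound C({|Tf| > t}) ≤ (A₁/t) ∫ |f| dC for all f, and the strong-type (∞,∞) bound ‖Tf‖_{L^∞(C)} ≤ A₂ ‖f‖_{L^∞(C)}, then for every 1 < p < ∞ there is a constant A₃ = A₃(K, A₁, A₂, p) such that ∫ |Tf|^p dC ≤ A₃ ∫ |f|^p dC. -/

import Mathlib

open scoped ENNReal
open Metric Set MeasureTheory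

noncomputable section

/-- `ℝⁿ` as Euclidean space. -/
abbrev Rn (n : ℕ) := EuclideanSpace ℝ (Fin n)

/-- The Choquet integral of a nonnegative function `g` with respect to a
(monotone) set function `C`: `∫ g dC := ∫_0^∞ C({g > t}) dt`. -/
noncomputable def choquet {X : Type*} (C : Set X → ℝ≥0∞) (g : X → ℝ≥0∞) : ℝ≥0∞ :=
  ∫⁻ t in Ioi (0 : ℝ), C {x | ENNReal.ofReal t < g x}

/-- The Choquet integral of `g` restricted to a set `A`. -/
noncomputable def choquetOn {X : Type*} (C : Set X → ℝ≥0∞) (A : Set X) (g : X → ℝ≥0∞) : ℝ≥0∞ :=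
  ∫⁻ t in Ioi (0 : ℝ), C {x | x ∈ A ∧ ENNReal.ofReal t < g x}

/-- The `L^∞(C)` norm: `inf {λ > 0 : C({|f| > λ}) = 0}` (formulated in `ℝ≥0∞`). -/
noncomputable def choquetEssSup {X : Type*} (C : Set X → ℝ≥0∞) (f : X → ℝ) : ℝ≥0∞ :=
  sInf {l : ℝ≥0∞ | C {x | l < ENNReal.ofReal |f x|} = 0}

/-- `C`-quasicontinuity of a function `f`. -/
def QuasiCont {X : Type*} [TopologicalSpace X] (C : Set X → ℝ≥0∞) (f : X → ℝ) : Prop :=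
  ∀ ε : ℝ≥0∞, 0 < ε → ∃ U : Set X, IsOpen U ∧ C U < ε ∧ ContinuousOn f Uᶜ

/-- Membership in the capacitary space `L^p(C)`: `C`-quasicontinuous with
finite `p`-th power Choquet integral. -/
def MemChoquetLp {X : Type*} [TopologicalSpace X] (C : Set X → ℝ≥0∞) (p : ℝ) (f : X → ℝ) : Prop :=
  QuasiCont C f ∧ choquet C (fun x => ENNReal.ofReal |f x| ^ p) < ∞

/-- 1D change of variables for lower integrals. -/
lemma lintegral_image_1d {s : Set ℝ} {F F' : ℝ → ℝ} (hs : MeasurableSet s)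
    (hF' : ∀ x ∈ s, HasDerivWithinAt F (F' x) s x) (hF : Set.InjOn F s) (g : ℝ → ℝ≥0∞) :
    ∫⁻ x in F '' s, g x = ∫⁻ x in s, ENNReal.ofReal |F' x| * g (F x) := by
  simpa only [ContinuousLinearMap.det_toSpanSingleton] using
    lintegral_image_eq_lintegral_abs_det_fderiv_mul volume hs
      (fun x hx => (hF' x hx).hasFDerivWithinAt) hF g

lemma image_mul_Ioi {c : ℝ} (hc : 0 < c) : (fun v : ℝ => c * v) '' Ioi 0 = Ioi (0 : ℝ) := by
  ext u
  constructor
  · rintro ⟨v, hv, rfl⟩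
    exact mul_pos hc hv
  · intro hu
    exact ⟨u / c, div_pos hu hc, by field_simp⟩

lemma image_rpow_Ioi {p : ℝ} (hp : 0 < p) : (fun t : ℝ => t ^ p) '' Ioi 0 = Ioi (0 : ℝ) := by
  ext u
  constructor
  · rintro ⟨t, ht, rfl⟩
    exact Real.rpow_pos_of_pos ht p
  · intro hu
    exact ⟨u ^ p⁻¹, Real.rpow_pos_of_pos hu _, Real.rpow_inv_rpow hu.le hp.ne'⟩

/-- Layer cake formula for the Choquet integral of a `p`-th power. -/
lemma choquet_rpow_layer {X : Type*} (C : Set X → ℝ≥0∞)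
    {p : ℝ} (hp : 0 < p) (g : X → ℝ) :
    choquet C (fun x => ENNReal.ofReal |g x| ^ p)
      = ∫⁻ t in Ioi (0 : ℝ),
          ENNReal.ofReal (p * t ^ (p - 1)) * C {x | ENNReal.ofReal t < ENNReal.ofReal |g x|} := by
  have h1 : choquet C (fun x => ENNReal.ofReal |g x| ^ p)
      = ∫⁻ t in Ioi (0 : ℝ), C {x | ENNReal.ofReal (t ^ p⁻¹) < ENNReal.ofReal |g x|} := by
    unfold choquet
    refine setLIntegral_congr_fun measurableSet_Ioi (fun t ht => ?_)
    congr 1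
    ext x
    simp only [mem_setOf_eq]
    have hofr : ENNReal.ofReal t = (ENNReal.ofReal (t ^ p⁻¹)) ^ p := by
      rw [ENNReal.ofReal_rpow_of_pos (Real.rpow_pos_of_pos ht _),
        Real.rpow_inv_rpow ht.le hp.ne']
    rw [hofr, ENNReal.rpow_lt_rpow_iff hp]
  have hinj : Set.InjOn (fun t : ℝ => t ^ p) (Ioi 0) := by
    intro a ha b hb hab
    have hab' : a ^ p = b ^ p := hab
    calc a = (a ^ p) ^ p⁻¹ := (Real.rpow_rpow_inv ha.le hp.ne').symm
      _ = (b ^ p) ^ p⁻¹ := by rw [hab']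
      _ = b := Real.rpow_rpow_inv hb.le hp.ne'
  have h3 := lintegral_image_1d (F := fun t : ℝ => t ^ p) (F' := fun t => p * t ^ (p - 1))
      measurableSet_Ioi
      (fun x hx => (Real.hasDerivAt_rpow_const (Or.inl (ne_of_gt hx))).hasDerivWithinAt)
      hinj (fun u => C {x | ENNReal.ofReal (u ^ p⁻¹) < ENNReal.ofReal |g x|})
  rw [image_rpow_Ioi hp] at h3
  rw [h1, h3]
  refine setLIntegral_congr_fun measurableSet_Ioi (fun t ht => ?_)
  have ht' : (0:ℝ) < t := ht
  rw [Real.rpow_rpow_inv ht'.le hp.ne', abs_of_nonneg (by positivity)]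

/-- If the Choquet essential supremum of `h` is at most `ofReal r`, then the capacity of the
level set above `r` vanishes. -/
lemma essSup_level_zero {X : Type*} (C : Set X → ℝ≥0∞)
    (hmono : ∀ A B : Set X, A ⊆ B → C A ≤ C B)
    (hsub : ∀ s : ℕ → Set X, C (⋃ i, s i) ≤ ∑' i, C (s i))
    (h : X → ℝ) (r : ℝ) (hle : choquetEssSup C h ≤ ENNReal.ofReal r) :
    C {x | ENNReal.ofReal r < ENNReal.ofReal |h x|} = 0 := by
  set l := ENNReal.ofReal r with hl
  have key : ∀ k : ℕ, C {x | l + ((k : ℝ≥0∞))⁻¹ < ENNReal.ofReal |h x|} = 0 := by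
    intro k
    have h1 : l < l + ((k : ℝ≥0∞))⁻¹ :=
      ENNReal.lt_add_right ENNReal.ofReal_ne_top
        (ENNReal.inv_ne_zero.2 (ENNReal.natCast_ne_top k))
    obtain ⟨m, hm, hmlt⟩ := sInf_lt_iff.mp (lt_of_le_of_lt hle h1)
    refine le_antisymm (le_trans (hmono _ _ fun x hx => lt_of_le_of_lt hmlt.le hx) hm.le)
      zero_le
  have hsubset : {x | l < ENNReal.ofReal |h x|}
      ⊆ ⋃ k : ℕ, {x | l + ((k : ℝ≥0∞))⁻¹ < ENNReal.ofReal |h x|} := by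
    intro x hx
    simp only [mem_setOf_eq] at hx
    have hne : ENNReal.ofReal |h x| - l ≠ 0 := (tsub_pos_of_lt hx).ne'
    obtain ⟨k, hk⟩ := ENNReal.exists_inv_nat_lt hne
    refine mem_iUnion.2 ⟨k, ?_⟩
    have h2 := ENNReal.add_lt_add_left (a := l) ENNReal.ofReal_ne_top hk
    rwa [add_tsub_cancel_of_le hx.le] at h2
  refine le_antisymm (le_trans (hmono _ _ hsubset) (le_trans (hsub _) ?_)) zero_le
  simp [key]

theorem statement5 (n : ℕ) (C : Set (Rn n) → ℝ≥0∞)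
    (hempty : C ∅ = 0)
    (hmono : ∀ A B : Set (Rn n), A ⊆ B → C A ≤ C B)
    (hsub : ∀ s : ℕ → Set (Rn n), C (⋃ i, s i) ≤ ∑' i, C (s i))
    (T : (Rn n → ℝ) → (Rn n → ℝ)) (K A₁ A₂ : ℝ)
    (hK : 0 < K) (hA₁ : 0 < A₁) (hA₂ : 0 < A₂)
    (hquasi : ∀ (f₁ f₂ : Rn n → ℝ) (x : Rn n),
      |T (f₁ + f₂) x| ≤ K * (|T f₁ x| + |T f₂ x|))
    (hweak : ∀ (f : Rn n → ℝ) (t : ℝ), 0 < t →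
      C {x | t < |T f x|} ≤
        ENNReal.ofReal (A₁ / t) * choquet C (fun x => ENNReal.ofReal |f x|))
    (hinfty : ∀ f : Rn n → ℝ,
      choquetEssSup C (T f) ≤ ENNReal.ofReal A₂ * choquetEssSup C f)
    (p : ℝ) (hp : 1 < p) :
    ∃ A₃ : ℝ, 0 < A₃ ∧ ∀ f : Rn n → ℝ,
      choquet C (fun x => ENNReal.ofReal |T f x| ^ p) ≤
        ENNReal.ofReal A₃ * choquet C (fun x => ENNReal.ofReal |f x| ^ p) := by
  have hp0 : (0:ℝ) < p := by linarith
  have hp1 : (0:ℝ) < p - 1 := by linarith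
  set c : ℝ := 2 * A₂ * K with hcdef
  have hc : 0 < c := by positivity
  set D : ℝ := 2 * K * A₁ * c ^ (p - 1) with hDdef
  have hD : 0 < D := by
    have := Real.rpow_pos_of_pos hc (p - 1)
    positivity
  refine ⟨D * (1 + 1 / (p - 1)), by positivity, fun f => ?_⟩
  -- basic set identification
  have setEq : ∀ (r : ℝ), 0 ≤ r → ∀ g : Rn n → ℝ,
      {x | ENNReal.ofReal r < ENNReal.ofReal |g x|} = {x | r < |g x|} := by
    intro r hr g
    ext x
    simp only [mem_setOf_eq]
    exact ENNReal.ofReal_lt_ofReal_iff_of_nonneg hr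
  -- the distribution function of f
  set φ : ℝ → ℝ≥0∞ := fun u => C {x | ENNReal.ofReal u < ENNReal.ofReal |f x|} with hφdef
  have φanti : Antitone φ := fun u v huv =>
    hmono _ _ fun x hx => lt_of_le_of_lt (ENNReal.ofReal_le_ofReal huv) hx
  have φmeas : Measurable φ := φanti.measurable
  -- two-set subadditivity
  have sub2 : ∀ A B : Set (Rn n), C (A ∪ B) ≤ C A + C B := by
    intro A B
    classical
    set s : ℕ → Set (Rn n) := fun i => if i = 0 then A else if i = 1 then B else ∅ with hs
    have hun : A ∪ B ⊆ ⋃ i, s i := by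
      rintro x (hx | hx)
      · exact mem_iUnion.2 ⟨0, by simp [hs, hx]⟩
      · exact mem_iUnion.2 ⟨1, by simp [hs, hx]⟩
    have htsum : ∑' i, C (s i) = C A + C B := by
      rw [tsum_eq_sum (s := ({0, 1} : Finset ℕ)) ?_]
      · rw [Finset.sum_pair (by norm_num)]
        simp [hs]
      · intro i hi
        simp only [Finset.mem_insert, Finset.mem_singleton, not_or] at hi
        simp [hs, hi.1, hi.2, hempty]
    calc C (A ∪ B) ≤ C (⋃ i, s i) := hmono _ _ hun
      _ ≤ ∑' i, C (s i) := hsub s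
      _ = C A + C B := htsum
  -- the key pointwise estimate on the distribution function of T f
  have key : ∀ t : ℝ, t ∈ Ioi (0:ℝ) →
      C {x | ENNReal.ofReal t < ENNReal.ofReal |T f x|}
        ≤ ENNReal.ofReal (2 * K * A₁ / t) *
            (ENNReal.ofReal (t / c) * φ (t / c)
              + ∫⁻ s in Ioi (0:ℝ), (if t < c * s then φ s else 0)) := by
    intro t ht
    have ht' : (0:ℝ) < t := ht
    set a : ℝ := t / c with hadef
    have ha : 0 < a := div_pos ht' hc
    have htK : 0 < t / (2 * K) := by positivity
    set fB : Rn n → ℝ := fun x => if a < |f x| then f x else 0 with hfB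
    set fS : Rn n → ℝ := fun x => if a < |f x| then 0 else f x with hfS
    have hfsum : f = fB + fS := by
      funext x
      simp only [hfB, hfS, Pi.add_apply]
      by_cases h : a < |f x| <;> simp [h]
    -- splitting of the level set
    have hsplit : {x | t < |T f x|} ⊆ {x | t / (2*K) < |T fB x|} ∪ {x | t / (2*K) < |T fS x|} := by
      intro x hx
      simp only [mem_setOf_eq] at hx
      have hq : |T f x| ≤ K * (|T fB x| + |T fS x|) := by
        have := hquasi fB fS x
        rwa [← hfsum] at this
      by_contra hcon
      simp only [mem_union, mem_setOf_eq, not_or, not_lt] at hcon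
      have h3 : K * (|T fB x| + |T fS x|) ≤ K * (t/(2*K) + t/(2*K)) :=
        mul_le_mul_of_nonneg_left (add_le_add hcon.1 hcon.2) hK.le
      have h4 : K * (t/(2*K) + t/(2*K)) = t := by field_simp; ring
      linarith
    -- the bounded part has zero capacity at level t/(2K)
    have hSzero : C {x | ENNReal.ofReal (t/(2*K)) < ENNReal.ofReal |T fS x|} = 0 := by
      apply essSup_level_zero C hmono hsub
      have hbdd : choquetEssSup C fS ≤ ENNReal.ofReal a := by
        apply sInf_le
        show C {x | ENNReal.ofReal a < ENNReal.ofReal |fS x|} = 0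
        have hb : ∀ x, |fS x| ≤ a := by
          intro x
          simp only [hfS]
          split
          · simpa using ha.le
          · next h => exact not_lt.1 h
        have hempty' : {x | ENNReal.ofReal a < ENNReal.ofReal |fS x|} = ∅ :=
          eq_empty_iff_forall_notMem.2 fun x hx =>
            absurd hx (not_lt.2 (ENNReal.ofReal_le_ofReal (hb x)))
        rw [hempty', hempty]
      calc choquetEssSup C (T fS) ≤ ENNReal.ofReal A₂ * choquetEssSup C fS := hinfty fS
        _ ≤ ENNReal.ofReal A₂ * ENNReal.ofReal a := mul_le_mul_right hbdd _
        _ = ENNReal.ofReal (t/(2*K)) := by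
            rw [← ENNReal.ofReal_mul hA₂.le]
            congr 1
            rw [hadef, hcdef]
            field_simp
    -- bound on the Choquet integral of |fB|
    have hchoq : choquet C (fun x => ENNReal.ofReal |fB x|)
        ≤ ENNReal.ofReal a * φ a + ∫⁻ s in Ioi (0:ℝ), (if t < c * s then φ s else 0) := by
      unfold choquet
      have hpt : ∀ s ∈ Ioi (0:ℝ),
          C {x | ENNReal.ofReal s < ENNReal.ofReal |fB x|}
            ≤ (Iic a).indicator (fun _ => φ a) s + (if t < c * s then φ s else 0) := by
        intro s hs
        have hs' : (0:ℝ) < s := hs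
        by_cases hts : t < c * s
        · rw [if_pos hts]
          have hsubB : {x | ENNReal.ofReal s < ENNReal.ofReal |fB x|}
              ⊆ {x | ENNReal.ofReal s < ENNReal.ofReal |f x|} := by
            intro x hx
            simp only [mem_setOf_eq] at hx ⊢
            refine lt_of_lt_of_le hx (ENNReal.ofReal_le_ofReal ?_)
            simp only [hfB]
            split
            · exact le_rfl
            · simpa using abs_nonneg (f x)
          exact le_trans (hmono _ _ hsubB) le_add_self
        · rw [if_neg hts]
          have hsa : s ≤ a := by
            rw [hadef, le_div_iff₀ hc]
            nlinarith [not_lt.1 hts]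
          have hsubB : {x | ENNReal.ofReal s < ENNReal.ofReal |fB x|}
              ⊆ {x | ENNReal.ofReal a < ENNReal.ofReal |f x|} := by
            intro x hx
            simp only [mem_setOf_eq] at hx ⊢
            by_cases hax : a < |f x|
            · exact (ENNReal.ofReal_lt_ofReal_iff_of_nonneg ha.le).2 hax
            · exfalso
              simp only [hfB, if_neg hax, abs_zero, ENNReal.ofReal_zero] at hx
              exact (ENNReal.not_lt_zero hx)
          calc C {x | ENNReal.ofReal s < ENNReal.ofReal |fB x|} ≤ φ a := hmono _ _ hsubB
            _ = (Iic a).indicator (fun _ => φ a) s + 0 := by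
                rw [indicator_of_mem (mem_Iic.2 hsa), add_zero]
      calc (∫⁻ s in Ioi (0:ℝ), C {x | ENNReal.ofReal s < ENNReal.ofReal |fB x|})
          ≤ ∫⁻ s in Ioi (0:ℝ),
              ((Iic a).indicator (fun _ => φ a) s + (if t < c * s then φ s else 0)) :=
            setLIntegral_mono' measurableSet_Ioi hpt
        _ = (∫⁻ s in Ioi (0:ℝ), (Iic a).indicator (fun _ => φ a) s)
              + ∫⁻ s in Ioi (0:ℝ), (if t < c * s then φ s else 0) :=
            lintegral_add_left (measurable_const.indicator measurableSet_Iic) _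
        _ = ENNReal.ofReal a * φ a + ∫⁻ s in Ioi (0:ℝ), (if t < c * s then φ s else 0) := by
            congr 1
            rw [lintegral_indicator measurableSet_Iic, Measure.restrict_restrict measurableSet_Iic,
              setLIntegral_const]
            have : Iic a ∩ Ioi 0 = Ioc 0 a := by
              ext y; simp [mem_Iic, mem_Ioi, mem_Ioc, and_comm]
            rw [this, Real.volume_Ioc, sub_zero, mul_comm]
    -- combine
    have h0 : {x | ENNReal.ofReal t < ENNReal.ofReal |T f x|}
        ⊆ {x | t / (2*K) < |T fB x|} ∪ {x | t / (2*K) < |T fS x|} := by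
      rw [setEq t ht'.le (T f)]
      exact hsplit
    calc C {x | ENNReal.ofReal t < ENNReal.ofReal |T f x|}
        ≤ C ({x | t / (2*K) < |T fB x|} ∪ {x | t / (2*K) < |T fS x|}) := hmono _ _ h0
      _ ≤ C {x | t / (2*K) < |T fB x|} + C {x | t / (2*K) < |T fS x|} := sub2 _ _
      _ = C {x | t / (2*K) < |T fB x|} := by
          rw [← setEq (t/(2*K)) htK.le (T fS), hSzero, add_zero]
      _ ≤ ENNReal.ofReal (A₁ / (t/(2*K))) * choquet C (fun x => ENNReal.ofReal |fB x|) :=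
          hweak fB (t/(2*K)) htK
      _ ≤ ENNReal.ofReal (2 * K * A₁ / t) *
            (ENNReal.ofReal (t / c) * φ (t / c)
              + ∫⁻ s in Ioi (0:ℝ), (if t < c * s then φ s else 0)) := by
          rw [show A₁ / (t/(2*K)) = 2 * K * A₁ / t by field_simp]
          exact mul_le_mul_right hchoq _
  -- layer cake formulas
  have layerT := choquet_rpow_layer C hp0 (T f)
  have layerf := choquet_rpow_layer C hp0 f
  -- measurability helpers
  have measRpow1 : Measurable fun t : ℝ => t ^ (p - 1) := measurable_id.pow measurable_const
  have measRpow2 : Measurable fun t : ℝ => t ^ (p - 2) := measurable_id.pow measurable_const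
  have meas1 : Measurable fun t : ℝ =>
      ENNReal.ofReal (2 * K * A₁ * p / c * t ^ (p - 1)) * φ (t / c) :=
    ((measRpow1.const_mul _).ennreal_ofReal).mul (φmeas.comp (measurable_id.div_const c))
  -- Step 1: apply the key estimate under the integral sign
  have step1 : choquet C (fun x => ENNReal.ofReal |T f x| ^ p)
      ≤ ∫⁻ t in Ioi (0:ℝ), ENNReal.ofReal (p * t ^ (p - 1)) *
          (ENNReal.ofReal (2 * K * A₁ / t) *
            (ENNReal.ofReal (t / c) * φ (t / c)
              + ∫⁻ s in Ioi (0:ℝ), (if t < c * s then φ s else 0))) := by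
    rw [layerT]
    exact setLIntegral_mono' measurableSet_Ioi fun t ht => mul_le_mul_right (key t ht) _
  -- Step 2: rearrange the integrand
  have step2 : (∫⁻ t in Ioi (0:ℝ), ENNReal.ofReal (p * t ^ (p - 1)) *
          (ENNReal.ofReal (2 * K * A₁ / t) *
            (ENNReal.ofReal (t / c) * φ (t / c)
              + ∫⁻ s in Ioi (0:ℝ), (if t < c * s then φ s else 0))))
      = ∫⁻ t in Ioi (0:ℝ),
          (ENNReal.ofReal (2 * K * A₁ * p / c * t ^ (p - 1)) * φ (t / c)
            + ∫⁻ s in Ioi (0:ℝ),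
                ENNReal.ofReal (2 * K * A₁ * p * t ^ (p - 2)) * (if t < c * s then φ s else 0)) := by
    refine setLIntegral_congr_fun measurableSet_Ioi (fun t ht => ?_)
    have ht' : (0:ℝ) < t := ht
    have e2 : ENNReal.ofReal (p * t ^ (p - 1)) * ENNReal.ofReal (2 * K * A₁ / t)
        = ENNReal.ofReal (2 * K * A₁ * p * t ^ (p - 2)) := by
      rw [← ENNReal.ofReal_mul (by positivity)]
      congr 1
      rw [show p - 1 = p - 2 + 1 by ring, Real.rpow_add_one ht'.ne']
      field_simp
    have e1 : ENNReal.ofReal (2 * K * A₁ * p * t ^ (p - 2)) * (ENNReal.ofReal (t / c) * φ (t / c))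
        = ENNReal.ofReal (2 * K * A₁ * p / c * t ^ (p - 1)) * φ (t / c) := by
      rw [← mul_assoc, ← ENNReal.ofReal_mul (by positivity)]
      congr 2
      rw [show p - 1 = p - 2 + 1 by ring, Real.rpow_add_one ht'.ne']
      field_simp
    calc ENNReal.ofReal (p * t ^ (p - 1)) *
          (ENNReal.ofReal (2 * K * A₁ / t) *
            (ENNReal.ofReal (t / c) * φ (t / c)
              + ∫⁻ s in Ioi (0:ℝ), (if t < c * s then φ s else 0)))
        = (ENNReal.ofReal (p * t ^ (p - 1)) * ENNReal.ofReal (2 * K * A₁ / t)) *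
            (ENNReal.ofReal (t / c) * φ (t / c))
          + (ENNReal.ofReal (p * t ^ (p - 1)) * ENNReal.ofReal (2 * K * A₁ / t)) *
            (∫⁻ s in Ioi (0:ℝ), (if t < c * s then φ s else 0)) := by ring
      _ = ENNReal.ofReal (2 * K * A₁ * p / c * t ^ (p - 1)) * φ (t / c)
          + ENNReal.ofReal (2 * K * A₁ * p * t ^ (p - 2)) *
            (∫⁻ s in Ioi (0:ℝ), (if t < c * s then φ s else 0)) := by rw [e2, e1]
      _ = ENNReal.ofReal (2 * K * A₁ * p / c * t ^ (p - 1)) * φ (t / c)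
          + ∫⁻ s in Ioi (0:ℝ),
              ENNReal.ofReal (2 * K * A₁ * p * t ^ (p - 2)) * (if t < c * s then φ s else 0) := by
        rw [lintegral_const_mul' _ _ ENNReal.ofReal_ne_top]
  -- Term A: linear change of variables
  have termA : (∫⁻ t in Ioi (0:ℝ), ENNReal.ofReal (2 * K * A₁ * p / c * t ^ (p - 1)) * φ (t / c))
      = ENNReal.ofReal D * choquet C (fun x => ENNReal.ofReal |f x| ^ p) := by
    have hder : ∀ x ∈ Ioi (0:ℝ), HasDerivWithinAt (fun v : ℝ => c * v) c (Ioi 0) x := by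
      intro x _
      simpa using ((hasDerivAt_id x).const_mul c).hasDerivWithinAt (s := Ioi (0:ℝ))
    have himg := lintegral_image_1d (F := fun v : ℝ => c * v) (F' := fun _ => c)
      measurableSet_Ioi hder
      (fun x _ y _ hxy => mul_left_cancel₀ hc.ne' hxy)
      (fun u => ENNReal.ofReal (2 * K * A₁ * p / c * u ^ (p - 1)) * φ (u / c))
    rw [image_mul_Ioi hc] at himg
    rw [himg]
    have hcong : ∀ v ∈ Ioi (0:ℝ),
        ENNReal.ofReal |c| *
          (ENNReal.ofReal (2 * K * A₁ * p / c * (c * v) ^ (p - 1)) * φ (c * v / c))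
        = ENNReal.ofReal D * (ENNReal.ofReal (p * v ^ (p - 1)) * φ v) := by
      intro v hv
      have hv' : (0:ℝ) < v := hv
      rw [mul_div_cancel_left₀ _ hc.ne', abs_of_pos hc, ← mul_assoc, ← mul_assoc,
        ← ENNReal.ofReal_mul hc.le, ← ENNReal.ofReal_mul hD.le]
      congr 2
      rw [Real.mul_rpow hc.le hv'.le, hDdef]
      field_simp
    rw [setLIntegral_congr_fun measurableSet_Ioi hcong,
      lintegral_const_mul' _ _ ENNReal.ofReal_ne_top]
    congr 1
    simp only [hφdef]
    exact layerf.symm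
  -- the elementary integral of t^(p-2)
  have Ecs : ∀ b : ℝ, 0 < b →
      (∫⁻ u in Ioo (0:ℝ) b, ENNReal.ofReal (2 * K * A₁ * p * u ^ (p - 2)))
        = ENNReal.ofReal (2 * K * A₁ * p * (b ^ (p - 1) / (p - 1))) := by
    intro b hb
    have hint : IntegrableOn (fun u : ℝ => 2 * K * A₁ * p * u ^ (p - 2)) (Ioo 0 b) := by
      have h1 : IntervalIntegrable (fun u : ℝ => u ^ (p - 2)) volume 0 b :=
        intervalIntegral.intervalIntegrable_rpow' (by linarith)
      rw [intervalIntegrable_iff_integrableOn_Ioo_of_le hb.le] at h1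
      exact h1.const_mul _
    have hnn : 0 ≤ᵐ[volume.restrict (Ioo (0:ℝ) b)] fun u : ℝ => 2 * K * A₁ * p * u ^ (p - 2) := by
      filter_upwards [ae_restrict_mem measurableSet_Ioo] with u hu
      have h2 : (0:ℝ) ≤ u ^ (p - 2) := Real.rpow_nonneg hu.1.le _
      positivity
    rw [← MeasureTheory.ofReal_integral_eq_lintegral_ofReal hint hnn]
    congr 1
    rw [← integral_Ioc_eq_integral_Ioo, ← intervalIntegral.integral_of_le hb.le,
      intervalIntegral.integral_const_mul,
      integral_rpow (Or.inl (by linarith : (-1:ℝ) < p - 2)),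
      Real.zero_rpow (ne_of_gt (by linarith : (0:ℝ) < p - 2 + 1)),
      show p - 2 + 1 = p - 1 by ring]
    ring
  -- Term B: Tonelli and the inner integral
  have measH : Measurable (Function.uncurry fun t s : ℝ =>
      ENNReal.ofReal (2 * K * A₁ * p * t ^ (p - 2)) * (if t < c * s then φ s else 0)) := by
    apply Measurable.mul
    · exact (((measurable_fst.pow measurable_const)).const_mul _).ennreal_ofReal
    · exact Measurable.ite (measurableSet_lt measurable_fst (measurable_snd.const_mul c))
        (φmeas.comp measurable_snd) measurable_const
  have termB : (∫⁻ t in Ioi (0:ℝ), ∫⁻ s in Ioi (0:ℝ),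
        ENNReal.ofReal (2 * K * A₁ * p * t ^ (p - 2)) * (if t < c * s then φ s else 0))
      = ENNReal.ofReal (D / (p - 1)) * choquet C (fun x => ENNReal.ofReal |f x| ^ p) := by
    rw [lintegral_lintegral_swap measH.aemeasurable]
    have hinner : ∀ s ∈ Ioi (0:ℝ),
        (∫⁻ t in Ioi (0:ℝ),
            ENNReal.ofReal (2 * K * A₁ * p * t ^ (p - 2)) * (if t < c * s then φ s else 0))
          = ENNReal.ofReal (D / (p - 1)) * (ENNReal.ofReal (p * s ^ (p - 1)) * φ s) := by
      intro s hs
      have hs' : (0:ℝ) < s := hs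
      have hcs : 0 < c * s := mul_pos hc hs'
      have hind : ∀ t : ℝ,
          ENNReal.ofReal (2 * K * A₁ * p * t ^ (p - 2)) * (if t < c * s then φ s else 0)
            = (Iio (c * s)).indicator
                (fun u => ENNReal.ofReal (2 * K * A₁ * p * u ^ (p - 2)) * φ s) t := by
        intro t
        by_cases h : t < c * s
        · simp [indicator_of_mem, mem_Iio, h]
        · simp [indicator_of_notMem, mem_Iio, h]
      calc (∫⁻ t in Ioi (0:ℝ),
              ENNReal.ofReal (2 * K * A₁ * p * t ^ (p - 2)) * (if t < c * s then φ s else 0))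
          = ∫⁻ t in Ioi (0:ℝ), (Iio (c * s)).indicator
                (fun u => ENNReal.ofReal (2 * K * A₁ * p * u ^ (p - 2)) * φ s) t :=
            lintegral_congr fun t => hind t
        _ = ∫⁻ t in Ioo (0:ℝ) (c * s), ENNReal.ofReal (2 * K * A₁ * p * t ^ (p - 2)) * φ s := by
            rw [lintegral_indicator measurableSet_Iio,
              Measure.restrict_restrict measurableSet_Iio, Iio_inter_Ioi]
        _ = (∫⁻ t in Ioo (0:ℝ) (c * s), ENNReal.ofReal (2 * K * A₁ * p * t ^ (p - 2))) * φ s :=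
            lintegral_mul_const _ ((measRpow2.const_mul _).ennreal_ofReal)
        _ = ENNReal.ofReal (2 * K * A₁ * p * ((c * s) ^ (p - 1) / (p - 1))) * φ s := by
            rw [Ecs _ hcs]
        _ = ENNReal.ofReal (D / (p - 1)) * (ENNReal.ofReal (p * s ^ (p - 1)) * φ s) := by
            rw [← mul_assoc, ← ENNReal.ofReal_mul (by positivity)]
            congr 2
            rw [Real.mul_rpow hc.le hs'.le, hDdef]
            field_simp
    rw [setLIntegral_congr_fun measurableSet_Ioi hinner,
      lintegral_const_mul' _ _ ENNReal.ofReal_ne_top]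
    congr 1
    simp only [hφdef]
    exact layerf.symm
  -- final assembly
  calc choquet C (fun x => ENNReal.ofReal |T f x| ^ p)
      ≤ ∫⁻ t in Ioi (0:ℝ), ENNReal.ofReal (p * t ^ (p - 1)) *
          (ENNReal.ofReal (2 * K * A₁ / t) *
            (ENNReal.ofReal (t / c) * φ (t / c)
              + ∫⁻ s in Ioi (0:ℝ), (if t < c * s then φ s else 0))) := step1
    _ = ∫⁻ t in Ioi (0:ℝ),
          (ENNReal.ofReal (2 * K * A₁ * p / c * t ^ (p - 1)) * φ (t / c)
            + ∫⁻ s in Ioi (0:ℝ),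
                ENNReal.ofReal (2 * K * A₁ * p * t ^ (p - 2)) * (if t < c * s then φ s else 0)) :=
        step2
    _ = (∫⁻ t in Ioi (0:ℝ), ENNReal.ofReal (2 * K * A₁ * p / c * t ^ (p - 1)) * φ (t / c))
          + ∫⁻ t in Ioi (0:ℝ), ∫⁻ s in Ioi (0:ℝ),
              ENNReal.ofReal (2 * K * A₁ * p * t ^ (p - 2)) * (if t < c * s then φ s else 0) :=
        lintegral_add_left meas1 _
    _ = ENNReal.ofReal D * choquet C (fun x => ENNReal.ofReal |f x| ^ p)
          + ENNReal.ofReal (D / (p - 1)) * choquet C (fun x => ENNReal.ofReal |f x| ^ p) := by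
        rw [termA, termB]
    _ = ENNReal.ofReal (D * (1 + 1 / (p - 1))) * choquet C (fun x => ENNReal.ofReal |f x| ^ p) := by
        rw [← add_mul, ← ENNReal.ofReal_add hD.le (by positivity),
          show D + D / (p - 1) = D * (1 + 1 / (p - 1)) by ring]

end
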